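/- Let f(x) = (d+1−x)/((d+x+1)(d−x)) on the interval [1, d−1] for an integer d ≥ 3. Then f is minimized over the integers 1,…,d−1 at one of the two integers d+1−⌊√(2(d+1))⌋ and d+1−⌈√(2(d+1))⌉; that is, min_{j=1,…,d−1} f(j) = min{ f(d+1−⌊√(2(d+1))⌋), f(d+1−⌈√(2(d+1))⌉) }. -/
import Mathlib

/-- Core comparison: `G a ≤ G b` where `G x = x/((2d+2-x)(x-1))`,
whenever `(a-b)(2d+2-ab) ≥ 0`. -/
lemma G_aux (d : ℕ) (hd : 3 ≤ d) (a b : ℝ) (ha2 : 2 ≤ a) (had : a ≤ d)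
    (hb2 : 2 ≤ b) (hbd : b ≤ d)
    (h : 0 ≤ (a - b) * (2 * (d : ℝ) + 2 - a * b)) :
    a / ((2 * (d : ℝ) + 2 - a) * (a - 1)) ≤ b / ((2 * (d : ℝ) + 2 - b) * (b - 1)) := by
  have hd3 : (3 : ℝ) ≤ d := by exact_mod_cast hd
  have hda : 0 < (2 * (d : ℝ) + 2 - a) * (a - 1) := by nlinarith
  have hdb : 0 < (2 * (d : ℝ) + 2 - b) * (b - 1) := by nlinarith
  rw [div_le_div_iff₀ hda hdb]
  nlinarith [h]

/-- For `d ≥ 3` and `f(x) = (d+1−x)/((d+x+1)(d−x))`, the minimum of `f` over the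
integers `1,…,d−1` equals `min{ f(d+1−⌊√(2(d+1))⌋), f(d+1−⌈√(2(d+1))⌉) }`. -/
theorem f_min_over_integers (d : ℕ) (hd : 3 ≤ d) :
    IsLeast
      {y : ℝ | ∃ j : ℕ, 1 ≤ j ∧ j ≤ d - 1 ∧
        y = ((d : ℝ) + 1 - j) / (((d : ℝ) + j + 1) * ((d : ℝ) - j))}
      (min
        (((d : ℝ) + 1 - ((d : ℝ) + 1 - ⌊Real.sqrt (2 * (d + 1))⌋₊)) /
          (((d : ℝ) + ((d : ℝ) + 1 - ⌊Real.sqrt (2 * (d + 1))⌋₊) + 1) *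
            ((d : ℝ) - ((d : ℝ) + 1 - ⌊Real.sqrt (2 * (d + 1))⌋₊))))
        (((d : ℝ) + 1 - ((d : ℝ) + 1 - ⌈Real.sqrt (2 * (d + 1))⌉₊)) /
          (((d : ℝ) + ((d : ℝ) + 1 - ⌈Real.sqrt (2 * (d + 1))⌉₊) + 1) *
            ((d : ℝ) - ((d : ℝ) + 1 - ⌈Real.sqrt (2 * (d + 1))⌉₊))))) := by
  set r : ℝ := Real.sqrt (2 * (d + 1)) with hr
  set s₀ : ℕ := ⌊r⌋₊ with hs₀
  set s₁ : ℕ := ⌈r⌉₊ with hs₁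
  have hd3 : (3 : ℝ) ≤ d := by exact_mod_cast hd
  have hr0 : 0 ≤ r := Real.sqrt_nonneg _
  have hN : r ^ 2 = 2 * (d : ℝ) + 2 := by
    rw [hr, Real.sq_sqrt (by positivity)]; ring
  have hfloor : (s₀ : ℝ) ≤ r := Nat.floor_le hr0
  have hceil : r ≤ (s₁ : ℝ) := Nat.le_ceil r
  have hr2 : (2 : ℝ) ≤ r := by nlinarith
  have hrd : r ≤ (d : ℝ) := by
    have h1 : r ≤ Real.sqrt ((d : ℝ) ^ 2) := by
      rw [hr]; exact Real.sqrt_le_sqrt (by nlinarith)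
    rwa [Real.sqrt_sq (by positivity)] at h1
  have hs02 : 2 ≤ s₀ := Nat.le_floor hr2
  have hs1d : s₁ ≤ d := Nat.ceil_le.mpr hrd
  have hs01 : s₀ ≤ s₁ := Nat.floor_le_ceil r
  have hs10 : s₁ ≤ s₀ + 1 := Nat.ceil_le_floor_add_one r
  have hs0d : s₀ ≤ d := le_trans hs01 hs1d
  have hs12 : 2 ≤ s₁ := le_trans hs02 hs01
  have hs0N : (s₀ : ℝ) ^ 2 ≤ 2 * (d : ℝ) + 2 := by nlinarith
  have hs1N : 2 * (d : ℝ) + 2 ≤ (s₁ : ℝ) ^ 2 := by nlinarith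
  clear_value r s₀ s₁
  have hA : ((d : ℝ) + 1 - ((d : ℝ) + 1 - (s₀ : ℝ))) /
      (((d : ℝ) + ((d : ℝ) + 1 - (s₀ : ℝ)) + 1) * ((d : ℝ) - ((d : ℝ) + 1 - (s₀ : ℝ))))
      = (s₀ : ℝ) / ((2 * (d : ℝ) + 2 - (s₀ : ℝ)) * ((s₀ : ℝ) - 1)) := by ring
  have hB : ((d : ℝ) + 1 - ((d : ℝ) + 1 - (s₁ : ℝ))) /
      (((d : ℝ) + ((d : ℝ) + 1 - (s₁ : ℝ)) + 1) * ((d : ℝ) - ((d : ℝ) + 1 - (s₁ : ℝ))))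
      = (s₁ : ℝ) / ((2 * (d : ℝ) + 2 - (s₁ : ℝ)) * ((s₁ : ℝ) - 1)) := by ring
  constructor
  · -- membership
    rcases le_total
        (((d : ℝ) + 1 - ((d : ℝ) + 1 - (s₀ : ℝ))) /
          (((d : ℝ) + ((d : ℝ) + 1 - (s₀ : ℝ)) + 1) * ((d : ℝ) - ((d : ℝ) + 1 - (s₀ : ℝ)))))
        (((d : ℝ) + 1 - ((d : ℝ) + 1 - (s₁ : ℝ))) /
          (((d : ℝ) + ((d : ℝ) + 1 - (s₁ : ℝ)) + 1) * ((d : ℝ) - ((d : ℝ) + 1 - (s₁ : ℝ)))))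
        with hAB | hAB
    · rw [min_eq_left hAB]
      refine ⟨d + 1 - s₀, by omega, by omega, ?_⟩
      have hc : ((d + 1 - s₀ : ℕ) : ℝ) = (d : ℝ) + 1 - (s₀ : ℝ) := by
        rw [Nat.cast_sub (by omega)]; push_cast; ring
      rw [hc]
    · rw [min_eq_right hAB]
      refine ⟨d + 1 - s₁, by omega, by omega, ?_⟩
      have hc : ((d + 1 - s₁ : ℕ) : ℝ) = (d : ℝ) + 1 - (s₁ : ℝ) := by
        rw [Nat.cast_sub (by omega)]; push_cast; ring
      rw [hc]
  · -- lower bound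
    rintro y ⟨j, hj1, hjd, rfl⟩
    set s : ℕ := d + 1 - j with hs
    have hjc : (j : ℝ) = (d : ℝ) + 1 - (s : ℝ) := by
      have : ((s : ℕ) : ℝ) = (d : ℝ) + 1 - (j : ℝ) := by
        rw [hs, Nat.cast_sub (by omega)]; push_cast; ring
      linarith [this]
    have hs2 : 2 ≤ s := by omega
    have hsd : s ≤ d := by omega
    clear_value s
    have hs2R : (2 : ℝ) ≤ (s : ℝ) := by exact_mod_cast hs2
    have hsdR : (s : ℝ) ≤ (d : ℝ) := by exact_mod_cast hsd
    have hs02R : (2 : ℝ) ≤ (s₀ : ℝ) := by exact_mod_cast hs02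
    have hs0dR : (s₀ : ℝ) ≤ (d : ℝ) := by exact_mod_cast hs0d
    have hs12R : (2 : ℝ) ≤ (s₁ : ℝ) := by exact_mod_cast hs12
    have hs1dR : (s₁ : ℝ) ≤ (d : ℝ) := by exact_mod_cast hs1d
    rw [hjc]
    have hGs : ((d : ℝ) + 1 - ((d : ℝ) + 1 - (s : ℝ))) /
        (((d : ℝ) + ((d : ℝ) + 1 - (s : ℝ)) + 1) * ((d : ℝ) - ((d : ℝ) + 1 - (s : ℝ))))
        = (s : ℝ) / ((2 * (d : ℝ) + 2 - (s : ℝ)) * ((s : ℝ) - 1)) := by ring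
    rw [hGs]
    rcases le_or_gt s s₀ with hcase | hcase
    · refine le_trans (min_le_left _ _) ?_
      rw [hA]
      refine G_aux d hd _ _ hs02R hs0dR hs2R hsdR ?_
      have hss0 : (s : ℝ) ≤ (s₀ : ℝ) := by exact_mod_cast hcase
      have h1 : 0 ≤ (s₀ : ℝ) - (s : ℝ) := by linarith
      have hmul : (s₀ : ℝ) * (s : ℝ) ≤ (s₀ : ℝ) * (s₀ : ℝ) :=
        mul_le_mul_of_nonneg_left hss0 (by linarith)
      have h2 : 0 ≤ 2 * (d : ℝ) + 2 - (s₀ : ℝ) * (s : ℝ) := by nlinarith [hmul, hs0N]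
      exact mul_nonneg h1 h2
    · refine le_trans (min_le_right _ _) ?_
      rw [hB]
      refine G_aux d hd _ _ hs12R hs1dR hs2R hsdR ?_
      have hss1 : (s₁ : ℝ) ≤ (s : ℝ) := by exact_mod_cast (by omega : s₁ ≤ s)
      have h1 : (s₁ : ℝ) - (s : ℝ) ≤ 0 := by linarith
      have hmul : (s₁ : ℝ) * (s₁ : ℝ) ≤ (s₁ : ℝ) * (s : ℝ) :=
        mul_le_mul_of_nonneg_left hss1 (by linarith)
      have hsq : (s₁ : ℝ) ^ 2 = (s₁ : ℝ) * (s₁ : ℝ) := by ring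
      have h2 : 2 * (d : ℝ) + 2 - (s₁ : ℝ) * (s : ℝ) ≤ 0 := by
        rw [hsq] at hs1N; linarith
      have h3 : ((s₁ : ℝ) - (s : ℝ)) * (2 * (d : ℝ) + 2 - (s₁ : ℝ) * (s : ℝ))
          = (-((s₁ : ℝ) - (s : ℝ))) * (-(2 * (d : ℝ) + 2 - (s₁ : ℝ) * (s : ℝ))) := by ring
      rw [h3]
      exact mul_nonneg (neg_nonneg.2 h1) (neg_nonneg.2 h2)
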